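/- Let c* be the unique positive root of 2 − 2e^c + c(e^c − 2) = 0. For all reals w and c with 0 ≤ w ≤ 1 and c ≥ 0, it holds that w·c²·e^{−c} − w²·c²·e^{−2c} ≤ (c*)²·(e^{−c*} − e^{−2c*}). -/

import Mathlib

open Real

noncomputable def hfun (x : ℝ) : ℝ := (x - 2) * Real.exp x + 2 - 2 * x
noncomputable def gfun (x : ℝ) : ℝ := x ^ 2 * (Real.exp (-x) - Real.exp (-(2 * x)))

lemma hfun_hasDerivAt (x : ℝ) : HasDerivAt hfun ((x - 1) * Real.exp x - 2) x := by
  have h := ((((hasDerivAt_id x).sub_const 2).mul (Real.hasDerivAt_exp x)).add_const 2).sub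
    ((hasDerivAt_id x).const_mul 2)
  exact h.congr_deriv (by simp only [id]; ring)

lemma hfun_deriv2 (x : ℝ) : deriv (deriv hfun) x = x * Real.exp x := by
  have h1 : deriv hfun = fun y => (y - 1) * Real.exp y - 2 :=
    funext fun y => (hfun_hasDerivAt y).deriv
  rw [h1]
  have h : HasDerivAt (fun y : ℝ => (y - 1) * Real.exp y - 2)
      (Real.exp x + (x - 1) * Real.exp x) x := by
    have h0 := (((hasDerivAt_id x).sub_const 1).mul (Real.hasDerivAt_exp x)).sub_const 2
    exact h0.congr_deriv (by simp only [id]; ring)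
  rw [h.deriv]; ring

lemma hfun_convex : StrictConvexOn ℝ (Set.Ici (0:ℝ)) hfun := by
  apply strictConvexOn_of_deriv2_pos (convex_Ici 0)
  · apply Continuous.continuousOn; unfold hfun; continuity
  · intro x hx
    rw [interior_Ici] at hx
    have : (deriv^[2] hfun) x = deriv (deriv hfun) x := by
      simp [Function.iterate_succ, Function.iterate_one]
    rw [this, hfun_deriv2]
    exact mul_pos hx (Real.exp_pos x)

lemma hfun_zero : hfun 0 = 0 := by simp [hfun]

lemma hfun_neg {cs : ℝ} (hcs : 0 < cs) (hr : hfun cs = 0) {c : ℝ} (h0 : 0 < c) (h1 : c < cs) :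
    hfun c < 0 := by
  have hne : (0:ℝ) ≠ cs := ne_of_lt hcs
  have ha : 0 < 1 - c / cs := by
    have := (div_lt_one hcs).mpr h1; linarith
  have hb : 0 < c / cs := div_pos h0 hcs
  have hab : (1 - c / cs) + c / cs = 1 := by ring
  have := hfun_convex.2 (Set.self_mem_Ici) (Set.mem_Ici.mpr hcs.le) hne ha hb hab
  have hcomb : (1 - c / cs) • (0:ℝ) + (c / cs) • cs = c := by
    rw [smul_eq_mul, smul_eq_mul, mul_zero, zero_add, div_mul_cancel₀ c hcs.ne']
  rw [hcomb, hfun_zero, hr] at this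
  simpa using this

lemma hfun_pos {cs : ℝ} (hcs : 0 < cs) (hr : hfun cs = 0) {c : ℝ} (h1 : cs < c) :
    0 < hfun c := by
  have hc : 0 < c := lt_trans hcs h1
  have hne : (0:ℝ) ≠ c := ne_of_lt hc
  have ha : 0 < 1 - cs / c := by
    have := (div_lt_one hc).mpr h1; linarith
  have hb : 0 < cs / c := div_pos hcs hc
  have hab : (1 - cs / c) + cs / c = 1 := by ring
  have := hfun_convex.2 (Set.self_mem_Ici) (Set.mem_Ici.mpr hc.le) hne ha hb hab
  have hcomb : (1 - cs / c) • (0:ℝ) + (cs / c) • c = cs := by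
    rw [smul_eq_mul, smul_eq_mul, mul_zero, zero_add, div_mul_cancel₀ cs hc.ne']
  rw [hcomb, hfun_zero, hr] at this
  simp only [smul_eq_mul, mul_zero, zero_add] at this
  nlinarith

lemma gfun_hasDerivAt (x : ℝ) :
    HasDerivAt gfun (-(x * Real.exp (-(2 * x))) * hfun x) x := by
  have h1 : HasDerivAt (fun y : ℝ => Real.exp (-y)) (-Real.exp (-x)) x := by
    have h := (Real.hasDerivAt_exp (-x)).comp x ((hasDerivAt_id x).neg)
    simp at h; exact h
  have h2 : HasDerivAt (fun y : ℝ => Real.exp (-(2 * y))) (-2 * Real.exp (-(2 * x))) x := by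
    have := (Real.hasDerivAt_exp (-(2 * x))).comp x (((hasDerivAt_id x).const_mul 2).neg)
    exact this.congr_deriv (by ring)
  have h3 := (hasDerivAt_pow 2 x).mul (h1.sub h2)
  have hkey : Real.exp (-(2 * x)) * Real.exp x = Real.exp (-x) := by
    rw [← Real.exp_add]; congr 1; ring
  refine h3.congr_deriv ?_
  simp only [Pi.sub_apply]
  unfold hfun
  linear_combination (x ^ 2 - 2 * x) * hkey

lemma gfun_le {cs : ℝ} (hcs : 0 < cs) (hr : hfun cs = 0) {c : ℝ} (hc : 0 ≤ c) :
    gfun c ≤ gfun cs := by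
  have hcont : ContinuousOn gfun (Set.univ) := by
    apply Continuous.continuousOn; unfold gfun; continuity
  rcases lt_trichotomy c cs with h | h | h
  · -- increasing on [0, cs]
    have hmono : StrictMonoOn gfun (Set.Icc 0 cs) := by
      apply strictMonoOn_of_deriv_pos (convex_Icc 0 cs) (hcont.mono (Set.subset_univ _))
      intro x hx
      rw [interior_Icc] at hx
      rw [(gfun_hasDerivAt x).deriv]
      have h1 := hfun_neg hcs hr hx.1 hx.2
      have h2 : 0 < x * Real.exp (-(2 * x)) := mul_pos hx.1 (Real.exp_pos _)
      nlinarith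
    exact (hmono (Set.mem_Icc.mpr ⟨hc, h.le⟩) (Set.mem_Icc.mpr ⟨hcs.le, le_refl _⟩) h).le
  · rw [h]
  · -- decreasing on [cs, ∞)
    have hanti : StrictAntiOn gfun (Set.Ici cs) := by
      apply strictAntiOn_of_deriv_neg (convex_Ici cs) (hcont.mono (Set.subset_univ _))
      intro x hx
      rw [interior_Ici] at hx
      rw [(gfun_hasDerivAt x).deriv]
      have h1 := hfun_pos hcs hr hx
      have h2 : 0 < x * Real.exp (-(2 * x)) := mul_pos (lt_trans hcs hx) (Real.exp_pos _)
      nlinarith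
    exact (hanti (Set.mem_Ici.mpr (le_refl _)) (Set.mem_Ici.mpr h.le) h).le

lemma cs_gt {cs : ℝ} (hcs : 0 < cs) (hr : hfun cs = 0) : 2.2 < cs := by
  by_contra hle
  push_neg at hle
  have hE : Real.exp cs * (cs - 2) = 2 * cs - 2 := by
    unfold hfun at hr; linear_combination hr
  rcases le_or_gt cs 2 with h2 | h2
  · have hlt : cs + 1 < Real.exp cs := Real.add_one_lt_exp (ne_of_gt hcs)
    nlinarith
  · -- 2 < cs ≤ 2.2 : exp cs ≤ exp 2.2 < 9.24, but (cs-2) exp cs = 2cs - 2 > 2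
    have hb1 : Real.exp (0.2 : ℝ) ≤ 1.25 := by
      have := Real.add_one_le_exp (-0.2 : ℝ)
      have hpos := Real.exp_pos (0.2 : ℝ)
      have : Real.exp (-0.2 : ℝ) * Real.exp (0.2:ℝ) = 1 := by
        rw [← Real.exp_add]; norm_num
      nlinarith [Real.add_one_le_exp (-0.2 : ℝ)]
    have hb2 : Real.exp (2 : ℝ) < 7.3890561 := by
      have h1 : Real.exp 1 < 2.7182818286 := Real.exp_one_lt_d9
      have he2 : Real.exp (2:ℝ) = Real.exp 1 * Real.exp 1 := by
        rw [← Real.exp_add]; norm_num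
      rw [he2]
      nlinarith [Real.exp_pos (1:ℝ)]
    have hb3 : Real.exp (2.2 : ℝ) < 9.24 := by
      have : Real.exp (2.2 : ℝ) = Real.exp 2 * Real.exp 0.2 := by
        rw [← Real.exp_add]; norm_num
      rw [this]
      nlinarith [Real.exp_pos (0.2:ℝ), Real.exp_pos (2:ℝ)]
    have hmono : Real.exp cs ≤ Real.exp (2.2 : ℝ) := Real.exp_le_exp.mpr hle
    nlinarith [Real.exp_pos cs]

theorem objective_global_bound (cs : ℝ) (hcs : 0 < cs)
    (hroot : 2 - 2 * Real.exp cs + cs * (Real.exp cs - 2) = 0)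
    (w c : ℝ) (hw : 0 ≤ w) (hw' : w ≤ 1) (hc : 0 ≤ c) :
    w * c ^ 2 * Real.exp (-c) - w ^ 2 * c ^ 2 * Real.exp (-(2 * c))
      ≤ cs ^ 2 * (Real.exp (-cs) - Real.exp (-(2 * cs))) := by
  have hr : hfun cs = 0 := by unfold hfun; linear_combination hroot
  have h22 : 2.2 < cs := cs_gt hcs hr
  -- RHS ≥ 1/4
  have hE : Real.exp cs * (cs - 2) = 2 * cs - 2 := by
    unfold hfun at hr; linear_combination hr
  have hinv : Real.exp (-cs) * Real.exp cs = 1 := by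
    rw [← Real.exp_add]; simp
  have hA : Real.exp (-cs) * (2 * cs - 2) = cs - 2 := by
    linear_combination (-(Real.exp (-cs))) * hE + (cs - 2) * hinv
  have hA2 : Real.exp (-(2 * cs)) = Real.exp (-cs) ^ 2 := by
    rw [sq, ← Real.exp_add]; congr 1; ring
  have hRHS : (1:ℝ)/4 ≤ cs ^ 2 * (Real.exp (-cs) - Real.exp (-(2 * cs))) := by
    rw [hA2]
    have hd : (0:ℝ) < 2 * cs - 2 := by linarith
    have hAval : Real.exp (-cs) = (cs - 2) / (2 * cs - 2) := by
      rw [eq_div_iff hd.ne']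
      linarith [hA]
    rw [hAval]
    have heq : cs ^ 2 * ((cs - 2) / (2 * cs - 2) - ((cs - 2) / (2 * cs - 2)) ^ 2)
        = cs ^ 3 * (cs - 2) / (2 * cs - 2) ^ 2 := by
      field_simp; ring
    rw [heq, le_div_iff₀ (by positivity)]
    nlinarith [sq_nonneg (cs - 2.2)]
  rcases le_or_gt c 1 with h1 | h1
  · -- small c : LHS ≤ c^2/4 ≤ 1/4
    have hc2 : Real.exp (-(2 * c)) = Real.exp (-c) ^ 2 := by
      rw [sq, ← Real.exp_add]; congr 1; ring
    rw [hc2]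
    have := sq_nonneg (c / 2 - w * c * Real.exp (-c))
    nlinarith [Real.exp_pos (-c), sq_nonneg c]
  · -- c ≥ 1 : LHS ≤ gfun c ≤ gfun cs
    have hle2 : gfun c ≤ gfun cs := gfun_le hcs hr hc
    have hLHS : w * c ^ 2 * Real.exp (-c) - w ^ 2 * c ^ 2 * Real.exp (-(2 * c)) ≤ gfun c := by
      unfold gfun
      have hec : (2:ℝ) ≤ Real.exp c :=
        le_trans (by nlinarith [Real.exp_one_gt_d9] : (2:ℝ) ≤ Real.exp 1)
          (Real.exp_le_exp.mpr h1.le)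
      have hrel : Real.exp (-c) = Real.exp (-(2 * c)) * Real.exp c := by
        rw [← Real.exp_add]; congr 1; ring
      rw [hrel]
      have hb := Real.exp_pos (-(2 * c))
      nlinarith [mul_nonneg (mul_nonneg (sq_nonneg c) hb.le) (mul_nonneg (sub_nonneg.mpr hw') (by nlinarith : (0:ℝ) ≤ Real.exp c - 1 - w))]
    calc _ ≤ gfun c := hLHS
    _ ≤ gfun cs := hle2
    _ = cs ^ 2 * (Real.exp (-cs) - Real.exp (-(2 * cs))) := rfl
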